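/- For any interaction system w on S, the relation δ_w = {([μ₁,...,μₙ], μ₁ + ... + μₙ)} ⊆ Multiset (Multiset S) × Multiset S (the graph of multiset concatenation/sum) is a simulation from !!w to !w. -/

import Mathlib

universe u

/-- An interaction system on a set of states `S`. -/
structure IS (S : Type u) where
  A : S → Type u
  D : (s : S) → A s → Type u
  n : (s : S) → (a : A s) → D s a → S

/-- `r` is a simulation from `w₁` to `w₂`. -/
def IsSim {S₁ S₂ : Type u} (w₁ : IS S₁) (w₂ : IS S₂) (r : S₁ → S₂ → Prop) : Prop :=
  ∀ s₁ s₂, r s₁ s₂ → ∀ a₁ : w₁.A s₁, ∃ a₂ : w₂.A s₂,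
    ∀ d₂ : w₂.D s₂ a₂, ∃ d₁ : w₁.D s₁ a₁, r (w₁.n s₁ a₁ d₁) (w₂.n s₂ a₂ d₂)
/-- Lists of actions for a list of states (multithreading). -/
def listA {S : Type u} (w : IS S) : List S → Type u
  | [] => PUnit
  | s :: l => w.A s × listA w l

/-- Lists of reactions to a list of actions. -/
def listD {S : Type u} (w : IS S) : (l : List S) → listA w l → Type u
  | [], _ => PUnit
  | _ :: l, a => w.D _ a.1 × listD w l a.2

/-- Componentwise next states. -/
def listN {S : Type u} (w : IS S) : (l : List S) → (a : listA w l) → listD w l a → List S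
  | [], _, _ => []
  | s :: l, a, d => w.n s a.1 d.1 :: listN w l a.2 d.2

/-- The exponential `!w`, on finite multisets of states. -/
def bang {S : Type u} (w : IS S) : IS (Multiset S) where
  A μ := Σ' (l : List S) (_ : (↑l : Multiset S) = μ), listA w l
  D _ a := listD w a.1 a.2.2
  n _ a d := ↑(listN w a.1 a.2.2 d)

/-- The graph of multiset sum (concatenation)
`δ_w = {([μ₁,…,μₙ], μ₁ + ⋯ + μₙ)}` is a simulation from `!!w` to `!w`. -/

def appA {S : Type u} (w : IS S) : ∀ {l₁ l₂ : List S}, listA w l₁ → listA w l₂ → listA w (l₁ ++ l₂)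
  | [], _, _, b => b
  | _ :: _, _, a, b => (a.1, appA w a.2 b)

def splitD1 {S : Type u} (w : IS S) : ∀ {l₁ l₂ : List S} (a : listA w l₁) (b : listA w l₂),
    listD w (l₁ ++ l₂) (appA w a b) → listD w l₁ a
  | [], _, _, _, _ => PUnit.unit
  | _ :: _, _, a, b, d => (d.1, splitD1 w a.2 b d.2)

def splitD2 {S : Type u} (w : IS S) : ∀ {l₁ l₂ : List S} (a : listA w l₁) (b : listA w l₂),
    listD w (l₁ ++ l₂) (appA w a b) → listD w l₂ b
  | [], _, _, _, d => d
  | _ :: _, _, a, b, d => splitD2 w a.2 b d.2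

theorem listN_app {S : Type u} (w : IS S) : ∀ {l₁ l₂ : List S} (a : listA w l₁) (b : listA w l₂)
    (d : listD w (l₁ ++ l₂) (appA w a b)),
    listN w (l₁ ++ l₂) (appA w a b) d
      = listN w l₁ a (splitD1 w a b d) ++ listN w l₂ b (splitD2 w a b d)
  | [], _, _, _, _ => rfl
  | s :: l₁, l₂, a, b, d => by
    simp only [listN, appA, List.cons_append, List.append_eq, splitD1, splitD2]
    rw [listN_app w a.2 b d.2]

theorem key {S : Type u} (w : IS S) : ∀ (L : List (Multiset S)) (a : listA (bang w) L),
    ∃ a₂ : (bang w).A ((↑L : Multiset (Multiset S)).sum),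
      ∀ d₂ : (bang w).D _ a₂, ∃ d₁ : listD (bang w) L a,
        ((↑(listN (bang w) L a d₁) : Multiset (Multiset S)).sum = (bang w).n _ a₂ d₂) := by
  intro L
  induction L with
  | nil =>
    intro a
    refine ⟨⟨[], by simp, PUnit.unit⟩, fun d₂ => ⟨PUnit.unit, ?_⟩⟩
    simp [listN, bang]
  | cons μ L ih =>
    rintro ⟨⟨l₀, h₀, aa₀⟩, a'⟩
    obtain ⟨⟨l', h', aa'⟩, hIH⟩ := ih a'
    refine ⟨⟨l₀ ++ l', by rw [show ((↑(l₀ ++ l') : Multiset S)) = ↑l₀ + ↑l' from (Multiset.coe_add l₀ l').symm, h₀, h']; simp, appA w aa₀ aa'⟩, fun d₂ => ?_⟩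
    obtain ⟨d₁', hd⟩ := hIH (splitD2 w aa₀ aa' d₂)
    refine ⟨(splitD1 w aa₀ aa' d₂, d₁'), ?_⟩
    show ((↑(listN (bang w) (μ :: L) _ _) : Multiset (Multiset S)).sum = _)
    rw [show (bang w).n _ ⟨l₀ ++ l', _, appA w aa₀ aa'⟩ d₂
        = ↑(listN w l₀ aa₀ (splitD1 w aa₀ aa' d₂) ++ listN w l' aa' (splitD2 w aa₀ aa' d₂))
          from congrArg (fun l : List S => (↑l : Multiset S)) (listN_app w aa₀ aa' d₂)]
    simp only [listN]
    rw [show ((↑((bang w).n μ ⟨l₀, h₀, aa₀⟩ (splitD1 w aa₀ aa' d₂)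
          :: listN (bang w) L a' d₁') : Multiset (Multiset S)))
        = (bang w).n μ ⟨l₀, h₀, aa₀⟩ (splitD1 w aa₀ aa' d₂)
          ::ₘ ↑(listN (bang w) L a' d₁') from (Multiset.cons_coe _ _).symm,
      Multiset.sum_cons, hd]
    show (↑(listN w l₀ aa₀ (splitD1 w aa₀ aa' d₂)) : Multiset S)
        + ↑(listN w l' aa' (splitD2 w aa₀ aa' d₂)) = _
    exact Multiset.coe_add _ _

theorem delta_isSim {S : Type u} (w : IS S) :
    IsSim (bang (bang w)) (bang w)
      (fun (M : Multiset (Multiset S)) (μ : Multiset S) => M.sum = μ) := by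
  intro M μ h a₁
  obtain ⟨L, hL, a⟩ := a₁
  subst hL
  subst h
  exact key w L a
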